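/- arXiv:2111.14642 — 2 statements merged into one kernel-verified Lean document; each statement's English description precedes it below -/
import Mathlib

section
/- Let 0 = t_0 < t_1 < ⋯ < t_N = T be a partition of (0,T], and let V^q be the space of functions v : (0,T] → H_0^1(Ω) that restrict on each I_n = (t_{n-1}, t_n] to a polynomial in t of degree ≤ q_n with coefficients in H_0^1(Ω). Define |||v|||^2 := (1/2)‖v̇(0^+)‖²_{L²} + (1/2)Σ_{n=1}^{N-1}‖[v̇]_n‖²_{L²} + (1/2)‖v̇(t_N^-)‖²_{L²} + Σ_{n=1}^N ∫_{I_n}‖v̇‖²_{L²} dt + (1/2)‖∇v(0^+)‖²_{L²} + (1/2)Σ_{n=1}^{N-1}‖∇[v]_n‖²_{L²} + (1/2)‖∇v(t_N^-)‖²_{L²}, where [w]_n = w(t_n^+) - w(t_n^-) (with the convention v(0^-)=0, v̇(0^-)=0 for the norm property). Then ||| · ||| is a norm on V^q; in particular |||v||| = 0 implies v ≡ 0 on (0,T]. -/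
open MeasureTheory
open scoped RealInnerProductSpace

private lemma poly_hasDerivAt {V : Type*} [NormedAddCommGroup V] [NormedSpace ℝ V]
    (m : ℕ) (c : ℕ → V) (s : ℝ) :
    HasDerivAt (fun x : ℝ => ∑ k ∈ Finset.range m, x ^ k • c k)
      (∑ k ∈ Finset.range m, ((k : ℝ) * s ^ (k - 1)) • c k) s := by
  apply HasDerivAt.fun_sum
  intro k _
  simpa using (hasDerivAt_pow k s).smul_const (c k)

private lemma poly_facts {V : Type*} [NormedAddCommGroup V] [NormedSpace ℝ V]
    {f : ℝ → V} {m : ℕ} {c : ℕ → V} (hf : ∀ s, f s = ∑ k ∈ Finset.range m, s ^ k • c k) :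
    Differentiable ℝ f ∧ Continuous (deriv f) := by
  have hfe : f = fun x : ℝ => ∑ k ∈ Finset.range m, x ^ k • c k := funext hf
  have hder : ∀ s : ℝ, HasDerivAt f
      (∑ k ∈ Finset.range m, ((k : ℝ) * s ^ (k - 1)) • c k) s := by
    intro s; rw [hfe]; exact poly_hasDerivAt _ _ _
  have hdiff : Differentiable ℝ f := fun s => (hder s).differentiableAt
  refine ⟨hdiff, ?_⟩
  have hderiv_eq : deriv f
      = fun s => ∑ k ∈ Finset.range m, ((k : ℝ) * s ^ (k - 1)) • c k :=
    funext fun s => (hder s).deriv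
  rw [hderiv_eq]
  exact continuous_finset_sum _ fun k _ =>
    (by fun_prop : Continuous fun s : ℝ => ((k : ℝ) * s ^ (k - 1)) • c k)

/-- Definiteness of the DG-in-time energy norm: if the energy norm of a piecewise
polynomial `v` vanishes, then `v ≡ 0` on `(0,T]`.  Here `V` plays the role of
`H₀¹(Ω)` (with the gradient norm) and `ι : V →L H` the embedding into `L²(Ω)`. -/
theorem energy_norm_definite {V H : Type*} [NormedAddCommGroup V] [InnerProductSpace ℝ V]
    [NormedAddCommGroup H] [InnerProductSpace ℝ H]
    (ι : V →L[ℝ] H) (hι : Function.Injective ι)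
    (N : ℕ) (hN : 1 ≤ N) (T : ℝ) (t : ℕ → ℝ)
    (ht0 : t 0 = 0) (htN : t N = T) (hmono : ∀ n < N, t n < t (n + 1))
    (q : ℕ → ℕ) (p : ℕ → ℝ → V)
    (hp : ∀ n, 1 ≤ n → n ≤ N →
      ∃ c : ℕ → V, ∀ s, p n s = ∑ k ∈ Finset.range (q n + 1), s ^ k • c k)
    (v : ℝ → V)
    (hv : ∀ n, 1 ≤ n → n ≤ N → ∀ s ∈ Set.Ioc (t (n - 1)) (t n), v s = p n s)
    (hnorm :
      (1 / 2) * ‖ι (deriv (p 1) (t 0))‖ ^ 2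
      + (1 / 2) * ∑ n ∈ Finset.Ico 1 N, ‖ι (deriv (p (n + 1)) (t n) - deriv (p n) (t n))‖ ^ 2
      + (1 / 2) * ‖ι (deriv (p N) (t N))‖ ^ 2
      + ∑ n ∈ Finset.Icc 1 N, ∫ s in (t (n - 1))..(t n), ‖ι (deriv (p n) s)‖ ^ 2
      + (1 / 2) * ‖p 1 (t 0)‖ ^ 2
      + (1 / 2) * ∑ n ∈ Finset.Ico 1 N, ‖p (n + 1) (t n) - p n (t n)‖ ^ 2
      + (1 / 2) * ‖p N (t N)‖ ^ 2 = 0) :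
    ∀ s ∈ Set.Ioc (0 : ℝ) T, v s = 0 := by
  classical
  -- adjacent increase
  have hadj : ∀ n, 1 ≤ n → n ≤ N → t (n - 1) < t n := by
    intro n h1 h2
    have h := hmono (n - 1) (by omega)
    rwa [Nat.sub_add_cancel h1] at h
  -- abbreviations for the constant parts of the integrand
  set E : ℝ := (1 / 2) * ‖p 1 (t 0)‖ ^ 2 with hEdef
  set F : ℝ := (1 / 2) * ∑ n ∈ Finset.Ico 1 N, ‖p (n + 1) (t n) - p n (t n)‖ ^ 2 with hFdef
  set G : ℝ := (1 / 2) * ‖p N (t N)‖ ^ 2 with hGdef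
  have hEpos : 0 ≤ E := by rw [hEdef]; positivity
  have hFn : ∀ n ∈ Finset.Ico 1 N, 0 ≤ ‖p (n + 1) (t n) - p n (t n)‖ ^ 2 :=
    fun n _ => by positivity
  have hFpos : 0 ≤ F := by rw [hFdef]; positivity
  have hGpos : 0 ≤ G := by rw [hGdef]; positivity
  -- nonnegativity of the leading terms
  have hA : 0 ≤ (1 / 2) * ‖ι (deriv (p 1) (t 0))‖ ^ 2 := by positivity
  have hB : 0 ≤ (1 / 2) * ∑ n ∈ Finset.Ico 1 N,
      ‖ι (deriv (p (n + 1)) (t n) - deriv (p n) (t n))‖ ^ 2 := by positivity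
  have hC : 0 ≤ (1 / 2) * ‖ι (deriv (p N) (t N))‖ ^ 2 := by positivity
  have hDn : ∀ n ∈ Finset.Icc 1 N,
      0 ≤ ∫ s in (t (n - 1))..(t n), (‖ι (deriv (p n) s)‖ ^ 2 + E + F + G) := by
    intro n hn
    rw [Finset.mem_Icc] at hn
    exact intervalIntegral.integral_nonneg (hadj n hn.1 hn.2).le
      (fun x _ => by positivity)
  have hDzero : ∑ n ∈ Finset.Icc 1 N,
      ∫ s in (t (n - 1))..(t n), (‖ι (deriv (p n) s)‖ ^ 2 + E + F + G) = 0 := by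
    have hD : 0 ≤ ∑ n ∈ Finset.Icc 1 N,
        ∫ s in (t (n - 1))..(t n), (‖ι (deriv (p n) s)‖ ^ 2 + E + F + G) :=
      Finset.sum_nonneg hDn
    linarith [hnorm]
  have hDeach := (Finset.sum_eq_zero_iff_of_nonneg hDn).mp hDzero
  -- pointwise vanishing of the integrand on each open-closed subinterval
  have hptws : ∀ n, 1 ≤ n → n ≤ N → ∀ s ∈ Set.Ioc (t (n - 1)) (t n),
      ‖ι (deriv (p n) s)‖ ^ 2 + E + F + G = 0 := by
    intro n h1 h2 s hs
    obtain ⟨c, hc⟩ := hp n h1 h2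
    obtain ⟨hdiff, hcont⟩ := poly_facts hc
    have hlt := hadj n h1 h2
    have hcont2 : Continuous fun s : ℝ => ‖ι (deriv (p n) s)‖ ^ 2 + E + F + G := by
      exact (((((ι.continuous.comp hcont).norm).pow 2).add continuous_const).add
        continuous_const).add continuous_const
    have hii : IntervalIntegrable (fun s => ‖ι (deriv (p n) s)‖ ^ 2 + E + F + G)
        volume (t (n - 1)) (t n) := hcont2.intervalIntegrable _ _
    have hae := (intervalIntegral.integral_eq_zero_iff_of_le_of_nonneg_ae hlt.le
      (Filter.Eventually.of_forall fun x => by positivity) hii).mp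
      (hDeach n (Finset.mem_Icc.mpr ⟨h1, h2⟩))
    have heq : Set.EqOn (fun s => ‖ι (deriv (p n) s)‖ ^ 2 + E + F + G) 0
        (Set.Ioc (t (n - 1)) (t n)) :=
      Measure.eqOn_Ioc_of_ae_eq volume hae hcont2.continuousOn continuousOn_const
    exact heq hs
  -- the derivative of each piece vanishes on the open-closed subinterval
  have hderiv0 : ∀ n, 1 ≤ n → n ≤ N → ∀ s ∈ Set.Ioc (t (n - 1)) (t n),
      deriv (p n) s = 0 := by
    intro n h1 h2 s hs
    have h := hptws n h1 h2 s hs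
    have hnn : 0 ≤ ‖ι (deriv (p n) s)‖ ^ 2 := by positivity
    have h0 : ‖ι (deriv (p n) s)‖ ^ 2 = 0 := by linarith
    have h1' : ι (deriv (p n) s) = 0 := by
      simpa [pow_eq_zero_iff, norm_eq_zero] using h0
    exact hι (by simpa using h1')
  -- extract the vanishing of the constant parts, using the last subinterval
  have hNmem : t N ∈ Set.Ioc (t (N - 1)) (t N) := ⟨hadj N hN le_rfl, le_rfl⟩
  have hEFG := hptws N hN le_rfl (t N) hNmem
  have hnnN : 0 ≤ ‖ι (deriv (p N) (t N))‖ ^ 2 := by positivity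
  have hEzero : p 1 (t 0) = 0 := by
    have h : ‖p 1 (t 0)‖ ^ 2 = 0 := by
      have : E = 0 := by linarith
      rw [hEdef] at this; linarith
    simpa [pow_eq_zero_iff, norm_eq_zero] using h
  have hFzero : ∀ n ∈ Finset.Ico 1 N, p (n + 1) (t n) = p n (t n) := by
    have hFzero' : F = 0 := by linarith
    have hsum : ∑ n ∈ Finset.Ico 1 N, ‖p (n + 1) (t n) - p n (t n)‖ ^ 2 = 0 := by
      rw [hFdef] at hFzero'; linarith
    intro n hn
    have h := (Finset.sum_eq_zero_iff_of_nonneg hFn).mp hsum n hn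
    have h2 : p (n + 1) (t n) - p n (t n) = 0 := by
      simpa [pow_eq_zero_iff, norm_eq_zero] using h
    exact sub_eq_zero.mp h2
  -- each `p n` is constant on its closed interval
  have hconst : ∀ n, 1 ≤ n → n ≤ N → ∀ x ∈ Set.Icc (t (n - 1)) (t n), p n x = p n (t n) := by
    intro n h1 h2 x hx
    obtain ⟨c, hc⟩ := hp n h1 h2
    obtain ⟨hdiff, hcont⟩ := poly_facts hc
    have hlt := hadj n h1 h2
    have hzIoc : Set.EqOn (deriv (p n)) 0 (Set.Ioc (t (n - 1)) (t n)) :=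
      fun s hs => hderiv0 n h1 h2 s hs
    have hzIcc : ∀ s ∈ Set.Icc (t (n - 1)) (t n), deriv (p n) s = 0 := by
      have hcl := hzIoc.closure hcont continuous_const
      intro s hs
      have hmem : s ∈ closure (Set.Ioc (t (n - 1)) (t n)) := by
        rwa [closure_Ioc hlt.ne]
      exact hcl hmem
    refine (convex_Icc (t (n - 1)) (t n)).is_const_of_fderivWithin_eq_zero
      hdiff.differentiableOn (fun z hz => ?_) hx (Set.right_mem_Icc.mpr hlt.le)
    rw [fderivWithin_eq_fderiv ((uniqueDiffOn_Icc hlt) z hz) (hdiff z)]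
    have h0 : HasDerivAt (p n) 0 z := by
      have h := (hdiff z).hasDerivAt
      rwa [hzIcc z hz] at h
    rw [h0.hasFDerivAt.fderiv]
    ext
    simp
  -- all pieces vanish identically
  have hzero : ∀ n, 1 ≤ n → n ≤ N → ∀ x ∈ Set.Icc (t (n - 1)) (t n), p n x = 0 := by
    intro n h1
    induction n, h1 using Nat.le_induction with
    | base =>
      intro h2 x hx
      have h0mem : t 0 ∈ Set.Icc (t (1 - 1)) (t 1) := by
        simp only [Nat.sub_self]
        exact Set.left_mem_Icc.mpr (hadj 1 le_rfl h2).le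
      rw [hconst 1 le_rfl h2 x hx, ← hconst 1 le_rfl h2 (t 0) h0mem, hEzero]
    | succ n hn ih =>
      intro h2 x hx
      have hnN : n ≤ N := by omega
      have hmem : t n ∈ Set.Icc (t (n + 1 - 1)) (t (n + 1)) := by
        simp only [Nat.add_sub_cancel]
        exact Set.left_mem_Icc.mpr (by simpa using (hadj (n + 1) (by omega) h2).le)
      have hjump := hFzero n (Finset.mem_Ico.mpr ⟨hn, by omega⟩)
      have hrt : t n ∈ Set.Icc (t (n - 1)) (t n) := Set.right_mem_Icc.mpr (hadj n hn hnN).le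
      rw [hconst (n + 1) (by omega) h2 x hx, ← hconst (n + 1) (by omega) h2 (t n) hmem,
        hjump, ih hnN (t n) hrt]
  -- covering (0,T] by the subintervals
  intro s hs
  have hex : ∃ k, s ≤ t k := ⟨N, htN ▸ hs.2⟩
  set n := Nat.find hex with hn_def
  have hn : s ≤ t n := Nat.find_spec hex
  have hnN : n ≤ N := Nat.find_min' hex (htN ▸ hs.2)
  have h1n : 1 ≤ n := by
    by_contra h
    have hzero' : n = 0 := by omega
    rw [hzero', ht0] at hn
    linarith [hs.1]
  have hlt : t (n - 1) < s := by
    have h := Nat.find_min hex (show n - 1 < n by omega)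
    push_neg at h
    exact h
  rw [hv n h1n hnN s ⟨hlt, hn⟩]
  exact hzero n h1n hnN s ⟨hlt.le, hn⟩
end

section
/- Let H be a Hilbert space, I_n = (t_{n-1}, t_n], and consider the finite-dimensional local DG problem: find u in the space of H_h-valued polynomials of degree ≤ q_n on I_n (H_h a finite-dimensional subspace of H_0^1(Ω)) such that ∫_{I_n}⟨ü, v̇⟩ dt + ∫_{I_n}(u̇, v̇)_{L²} dt + ∫_{I_n}(∇u, ∇v̇)_{L²} dt + (u̇(t_{n-1}^+), v̇(t_{n-1}^+))_{L²} + (∇u(t_{n-1}^+), ∇v(t_{n-1}^+))_{L²} = RHS(v) for all test polynomials v. If RHS ≡ 0 then u ≡ 0; consequently the local problem has a unique solution for any given data. -/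
open MeasureTheory
open scoped RealInnerProductSpace


/-- The homogeneous local DG problem has only the trivial solution. -/
theorem local_problem_trivial {V H : Type*} [NormedAddCommGroup V] [InnerProductSpace ℝ V]
    [NormedAddCommGroup H] [InnerProductSpace ℝ H]
    (ι : V →L[ℝ] H) (hι : Function.Injective ι)
    (a b : ℝ) (hab : a < b) (q : ℕ) (u : ℝ → V)
    (hu : ∃ c : ℕ → V, ∀ s, u s = ∑ k ∈ Finset.range (q + 1), s ^ k • c k)
    (hom : ∀ v : ℝ → V,
      (∃ d : ℕ → V, ∀ s, v s = ∑ k ∈ Finset.range (q + 1), s ^ k • d k) →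
      (∫ s in a..b, ⟪ι (deriv (deriv u) s), ι (deriv v s)⟫)
        + (∫ s in a..b, ⟪ι (deriv u s), ι (deriv v s)⟫)
        + (∫ s in a..b, ⟪u s, deriv v s⟫)
        + ⟪ι (deriv u a), ι (deriv v a)⟫ + ⟪u a, v a⟫ = 0) :
    ∀ s, u s = 0 := by
  obtain ⟨c, hc⟩ := hu
  have hufun : u = fun s => ∑ k ∈ Finset.range (q + 1), s ^ k • c k := funext hc
  subst hufun
  set u0 : ℝ → V := fun s => ∑ k ∈ Finset.range (q + 1), s ^ k • c k with hu0
  set u1 : ℝ → V := fun s => ∑ k ∈ Finset.range (q + 1),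
    ((k : ℝ) * s ^ (k - 1)) • c k with hu1
  set u2 : ℝ → V := fun s => ∑ k ∈ Finset.range (q + 1),
    ((k : ℝ) * (((k - 1 : ℕ) : ℝ) * s ^ (k - 1 - 1))) • c k with hu2
  have hd1 : ∀ s, HasDerivAt u0 (u1 s) s := fun s =>
    HasDerivAt.fun_sum fun k _ => (hasDerivAt_pow k s).smul_const (c k)
  have hd2 : ∀ s, HasDerivAt u1 (u2 s) s := fun s =>
    HasDerivAt.fun_sum fun k _ => ((hasDerivAt_pow (k - 1) s).const_mul ((k : ℝ))).smul_const (c k)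
  have hD1 : deriv u0 = u1 := funext fun s => (hd1 s).deriv
  have hD2 : deriv (deriv u0) = u2 := by rw [hD1]; exact funext fun s => (hd2 s).deriv
  have cu1 : Continuous u1 :=
    continuous_finset_sum _ fun k _ =>
      (continuous_const.mul (continuous_pow (k - 1))).smul continuous_const
  have cu2 : Continuous u2 :=
    continuous_finset_sum _ fun k _ =>
      (continuous_const.mul (continuous_const.mul (continuous_pow (k - 1 - 1)))).smul
        continuous_const
  have cu0 : Continuous u0 :=
    continuous_finset_sum _ fun k _ => (continuous_pow k).smul continuous_const
  have E := hom u0 ⟨c, fun s => rfl⟩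
  rw [hD2, hD1] at E
  -- derivative of s ↦ ι (u1 s)
  have hι1 : ∀ x : ℝ, HasDerivAt (fun s => ι (u1 s)) (ι (u2 x)) x := fun x =>
    ι.hasFDerivAt.comp_hasDerivAt x (hd2 x)
  -- FTC for F s = ⟪ι (u1 s), ι (u1 s)⟫
  have intF : (∫ s in a..b, (⟪ι (u1 s), ι (u2 s)⟫ + ⟪ι (u2 s), ι (u1 s)⟫))
      = ⟪ι (u1 b), ι (u1 b)⟫ - ⟪ι (u1 a), ι (u1 a)⟫ := by
    refine intervalIntegral.integral_eq_sub_of_hasDerivAt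
      (fun x _ => (hι1 x).inner ℝ (hι1 x)) ?_
    exact (((ι.continuous.comp cu1).inner (ι.continuous.comp cu2)).add
      ((ι.continuous.comp cu2).inner (ι.continuous.comp cu1))).intervalIntegrable a b
  have intG : (∫ s in a..b, (⟪u0 s, u1 s⟫ + ⟪u1 s, u0 s⟫))
      = ⟪u0 b, u0 b⟫ - ⟪u0 a, u0 a⟫ := by
    refine intervalIntegral.integral_eq_sub_of_hasDerivAt
      (fun x _ => (hd1 x).inner ℝ (hd1 x)) ?_
    exact ((cu0.inner cu1).add (cu1.inner cu0)).intervalIntegrable a b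
  have intF' : (∫ s in a..b, ⟪ι (u2 s), ι (u1 s)⟫)
      = (⟪ι (u1 b), ι (u1 b)⟫ - ⟪ι (u1 a), ι (u1 a)⟫) / 2 := by
    have h2 : (∫ s in a..b, (⟪ι (u1 s), ι (u2 s)⟫ + ⟪ι (u2 s), ι (u1 s)⟫))
        = 2 * ∫ s in a..b, ⟪ι (u2 s), ι (u1 s)⟫ := by
      rw [← intervalIntegral.integral_const_mul]
      refine intervalIntegral.integral_congr fun x _ => ?_
      rw [real_inner_comm (ι (u1 x)) (ι (u2 x))]; ring
    rw [h2] at intF; linarith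
  have intG' : (∫ s in a..b, ⟪u0 s, u1 s⟫) = (⟪u0 b, u0 b⟫ - ⟪u0 a, u0 a⟫) / 2 := by
    have h2 : (∫ s in a..b, (⟪u0 s, u1 s⟫ + ⟪u1 s, u0 s⟫))
        = 2 * ∫ s in a..b, ⟪u0 s, u1 s⟫ := by
      rw [← intervalIntegral.integral_const_mul]
      refine intervalIntegral.integral_congr fun x _ => ?_
      rw [real_inner_comm (u1 x) (u0 x)]; ring
    rw [h2] at intG; linarith
  have hInt0 : 0 ≤ ∫ s in a..b, ⟪ι (u1 s), ι (u1 s)⟫ :=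
    intervalIntegral.integral_nonneg hab.le fun x _ => real_inner_self_nonneg
  rw [intF', intG'] at E
  have nb1 : (0:ℝ) ≤ ⟪ι (u1 b), ι (u1 b)⟫ := real_inner_self_nonneg
  have na1 : (0:ℝ) ≤ ⟪ι (u1 a), ι (u1 a)⟫ := real_inner_self_nonneg
  have nb0 : (0:ℝ) ≤ ⟪u0 b, u0 b⟫ := real_inner_self_nonneg
  have na0 : (0:ℝ) ≤ ⟪u0 a, u0 a⟫ := real_inner_self_nonneg
  have hIz : (∫ s in a..b, ⟪ι (u1 s), ι (u1 s)⟫) = 0 := by linarith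
  have hua : ⟪u0 a, u0 a⟫ = 0 := by linarith
  have hua0 : u0 a = 0 := inner_self_eq_zero.mp hua
  -- the integrand vanishes on (a, b]
  have hIoc : ∀ x ∈ Set.Ioc a b, u1 x = 0 := by
    have hset : (∫ x in Set.Ioc a b, ⟪ι (u1 x), ι (u1 x)⟫) = 0 := by
      rwa [intervalIntegral.integral_of_le hab.le] at hIz
    have hgc : Continuous fun x => ⟪ι (u1 x), ι (u1 x)⟫ :=
      (ι.continuous.comp cu1).inner (ι.continuous.comp cu1)
    have hae : (fun x => ⟪ι (u1 x), ι (u1 x)⟫) =ᵐ[volume.restrict (Set.Ioc a b)] 0 :=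
      (setIntegral_eq_zero_iff_of_nonneg_ae
        (Filter.Eventually.of_forall fun x => real_inner_self_nonneg)
        (hgc.integrableOn_Ioc)).mp hset
    have heq : Set.EqOn (fun x => ⟪ι (u1 x), ι (u1 x)⟫) 0 (Set.Ioc a b) :=
      Measure.eqOn_Ioc_of_ae_eq volume hae hgc.continuousOn continuousOn_const
    intro x hx
    have : ι (u1 x) = 0 := inner_self_eq_zero.mp (heq hx)
    exact hι (by rw [this, map_zero])
  -- now a polynomial argument: for every w, ⟪u0 s, w⟫ = 0 for all s
  have key : ∀ (s : ℝ) (w : V), ⟪u0 s, w⟫ = 0 := by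
    intro s w
    set p : Polynomial ℝ :=
      ∑ k ∈ Finset.range (q + 1), Polynomial.C ⟪c k, w⟫ * Polynomial.X ^ k with hp
    have hpe : ∀ x : ℝ, p.eval x = ⟪u0 x, w⟫ := by
      intro x
      rw [hu0]
      simp only [hp, Polynomial.eval_finset_sum, Polynomial.eval_mul, Polynomial.eval_C,
        Polynomial.eval_pow, Polynomial.eval_X, sum_inner, real_inner_smul_left]
      exact Finset.sum_congr rfl fun k _ => mul_comm _ _
    have hder : ∀ x : ℝ, p.derivative.eval x = ⟪u1 x, w⟫ := by
      intro x
      have h1 : HasDerivAt (fun x => ⟪u0 x, w⟫) (p.derivative.eval x) x := by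
        have := p.hasDerivAt x
        rwa [show (fun x => p.eval x) = fun x => ⟪u0 x, w⟫ from funext hpe] at this
      have h2 : HasDerivAt (fun x => ⟪u0 x, w⟫) (⟪u1 x, w⟫) x := by
        have := (hd1 x).inner ℝ (hasDerivAt_const x w)
        simpa using this
      exact h1.unique h2
    have hpd : p.derivative = 0 := by
      refine Polynomial.eq_zero_of_infinite_isRoot _ ?_
      refine (Set.Ioc_infinite hab).mono ?_
      intro x hx
      show p.derivative.IsRoot x
      rw [Polynomial.IsRoot, hder x, hIoc x hx, inner_zero_left]
    have hpc : p = Polynomial.C (p.coeff 0) := Polynomial.eq_C_of_derivative_eq_zero hpd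
    have h0 : p.coeff 0 = 0 := by
      have := hpe a
      rw [hua0, inner_zero_left, hpc] at this
      simpa using this
    have hp0 : p = 0 := by rw [hpc, h0, map_zero]
    have := hpe s
    rw [hp0] at this
    simpa using this.symm
  intro s
  exact inner_self_eq_zero.mp (key s (u0 s))
end
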